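/- arXiv:1012.0255 — 4 statements merged into one kernel-verified Lean document; each statement's English description precedes it below -/
import Mathlib

section
/- Let $k \ge 2$ and let $Z$ be the $k \times k$ grid graph, and let $\Gamma$ denote the set of $k$ vertices in the first row of $Z$. Then for every partition $(A,B)$ of the vertex set of $Z$ with both $A$ and $B$ nonempty, the number of edges of $Z$ with one endpoint in $A$ and one endpoint in $B$ is at least $\min\{|A\cap\Gamma|, |B\cap\Gamma|\} + 1$. -/
/-- The `m × n` grid graph on vertex set `Fin m × Fin n`: vertices are adjacent
iff they agree in one coordinate and differ by exactly one in the other. -/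
def rectGrid (m n : ℕ) : SimpleGraph (Fin m × Fin n) where
  Adj u v := (u.1 = v.1 ∧ (u.2.val + 1 = v.2.val ∨ v.2.val + 1 = u.2.val)) ∨
             (u.2 = v.2 ∧ (u.1.val + 1 = v.1.val ∨ v.1.val + 1 = u.1.val))
  symm := by
    constructor
    rintro u v (⟨h, h'⟩ | ⟨h, h'⟩)
    · exact Or.inl ⟨h.symm, h'.symm⟩
    · exact Or.inr ⟨h.symm, h'.symm⟩
  loopless := by
    constructor
    rintro u (⟨-, h' | h'⟩ | ⟨-, h' | h'⟩) <;> omega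

/-- The `k × k` grid graph. -/
def gridGraph (k : ℕ) : SimpleGraph (Fin k × Fin k) := rectGrid k k

/-- The set of edges of `G` with one endpoint in `A` and one endpoint in `B`. -/
def cutSet {V : Type*} (G : SimpleGraph V) (A B : Set V) : Set (Sym2 V) :=
  {e | ∃ u v, G.Adj u v ∧ u ∈ A ∧ v ∈ B ∧ e = s(u, v)}

lemma exists_step (p : ℕ → Prop) [DecidablePred p] :
    ∀ b a, a < b → p a → ¬ p b → ∃ i, a ≤ i ∧ i + 1 ≤ b ∧ p i ∧ ¬ p (i+1) := by
  intro b
  induction b with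
  | zero => omega
  | succ n ih =>
    intro a hab ha hb
    by_cases hn : p n
    · exact ⟨n, by omega, by omega, hn, hb⟩
    · rcases Nat.lt_or_ge a n with h | h
      · obtain ⟨i, h1, h2, h3⟩ := ih a h ha hn
        exact ⟨i, h1, by omega, h3⟩
      · have hne : a = n := by omega
        exact absurd ha (hne ▸ hn)

lemma exists_adj_diff (p : ℕ → Prop) [DecidablePred p] (k i1 i2 : ℕ)
    (h1 : i1 < k) (h2 : i2 < k) (hp1 : p i1) (hp2 : ¬ p i2) :
    ∃ i, i + 1 < k ∧ ((p i ∧ ¬ p (i+1)) ∨ (¬ p i ∧ p (i+1))) := by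
  rcases Nat.lt_or_ge i1 i2 with h | h
  · obtain ⟨i, ha, hb, hc, hd⟩ := exists_step p i2 i1 h hp1 hp2
    exact ⟨i, by omega, Or.inl ⟨hc, hd⟩⟩
  · have h' : i2 < i1 := by
      rcases Nat.eq_or_lt_of_le h with h | h
      · exact absurd (h ▸ hp1) hp2
      · exact h
    obtain ⟨i, ha, hb, hc, hd⟩ := exists_step (fun n => ¬ p n) i1 i2 h' hp2 (not_not_intro hp1)
    exact ⟨i, by omega, Or.inr ⟨hc, not_not.mp hd⟩⟩

/-- Claim: in the `k × k` grid (`k ≥ 2`), any partition `(A, B)` of the vertices into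
two nonempty parts cuts at least `min {|A ∩ Γ|, |B ∩ Γ|} + 1` edges, where `Γ` is the
set of vertices of the first row. -/
theorem grid_cut_lower_bound (k : ℕ) (hk : 2 ≤ k) (A B : Set (Fin k × Fin k))
    (hU : A ∪ B = Set.univ) (hd : Disjoint A B)
    (hA : A.Nonempty) (hB : B.Nonempty) :
    min ({u ∈ A | u.1.val = 0}.ncard) ({u ∈ B | u.1.val = 0}.ncard) + 1 ≤
      (cutSet (gridGraph k) A B).ncard := by
  classical
  have hk0 : 0 < k := by omega
  -- B is the complement of A
  have hAB : ∀ v : Fin k × Fin k, v ∈ B ↔ v ∉ A := by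
    intro v
    constructor
    · intro hv hva
      exact Set.disjoint_left.mp hd hva hv
    · intro hv
      have : v ∈ A ∪ B := hU ▸ Set.mem_univ v
      rcases this with h | h
      · exact absurd h hv
      · exact h
  set CS := cutSet (gridGraph k) A B with hCS
  -- cutSet is symmetric in membership
  have memCS : ∀ (u v : Fin k × Fin k), (gridGraph k).Adj u v → u ∈ A → v ∉ A →
      s(u, v) ∈ CS := by
    intro u v hadj hu hv
    exact ⟨u, v, hadj, hu, (hAB v).mpr hv, rfl⟩
  -- mixedness of columns / rows
  set colMixed : Fin k → Prop := fun j => ∃ i i' : Fin k, (i, j) ∈ A ∧ (i', j) ∉ A with hcolM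
  set rowMixed : Fin k → Prop := fun i => ∃ j j' : Fin k, (i, j) ∈ A ∧ (i, j') ∉ A with hrowM
  -- a vertical cut edge in each mixed column
  have colEdge : ∀ j : Fin k, colMixed j → ∃ e ∈ CS, ∃ i : ℕ, ∃ h : i + 1 < k,
      e = s(((⟨i, by omega⟩ : Fin k), j), ((⟨i+1, h⟩ : Fin k), j)) := by
    intro j hj
    obtain ⟨i1, i2, h1, h2⟩ := hj
    obtain ⟨i, hik, hcase⟩ := exists_adj_diff (fun n => ∀ h : n < k, ((⟨n, h⟩ : Fin k), j) ∈ A)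
      k i1.val i2.val i1.isLt i2.isLt
      (by intro h; simpa using h1) (by intro hc; exact h2 (by simpa using hc i2.isLt))
    have hik' : i < k := by omega
    set u : Fin k × Fin k := ((⟨i, hik'⟩ : Fin k), j)
    set v : Fin k × Fin k := ((⟨i+1, hik⟩ : Fin k), j)
    have hadj : (gridGraph k).Adj u v := Or.inr ⟨rfl, Or.inl rfl⟩
    rcases hcase with ⟨hpi, hpi1⟩ | ⟨hpi, hpi1⟩
    · refine ⟨s(u, v), memCS u v hadj (hpi hik') ?_, i, hik, rfl⟩
      intro hc
      exact hpi1 (fun h => hc)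
    · refine ⟨s(u, v), ?_, i, hik, rfl⟩
      have : s(v, u) ∈ CS :=
        memCS v u hadj.symm (hpi1 hik) (fun hc => hpi (fun h => hc))
      rwa [Sym2.eq_swap] at this
  -- a horizontal cut edge in each mixed row
  have rowEdge : ∀ i : Fin k, rowMixed i → ∃ e ∈ CS, ∃ j : ℕ, ∃ h : j + 1 < k,
      e = s((i, (⟨j, by omega⟩ : Fin k)), (i, (⟨j+1, h⟩ : Fin k))) := by
    intro i hi
    obtain ⟨j1, j2, h1, h2⟩ := hi
    obtain ⟨j, hjk, hcase⟩ := exists_adj_diff (fun n => ∀ h : n < k, (i, (⟨n, h⟩ : Fin k)) ∈ A)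
      k j1.val j2.val j1.isLt j2.isLt
      (by intro h; simpa using h1) (by intro hc; exact h2 (by simpa using hc j2.isLt))
    have hjk' : j < k := by omega
    set u : Fin k × Fin k := (i, (⟨j, hjk'⟩ : Fin k))
    set v : Fin k × Fin k := (i, (⟨j+1, hjk⟩ : Fin k))
    have hadj : (gridGraph k).Adj u v := Or.inl ⟨rfl, Or.inl rfl⟩
    rcases hcase with ⟨hpi, hpi1⟩ | ⟨hpi, hpi1⟩
    · refine ⟨s(u, v), memCS u v hadj (hpi hjk') ?_, j, hjk, rfl⟩
      intro hc
      exact hpi1 (fun h => hc)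
    · refine ⟨s(u, v), ?_, j, hjk, rfl⟩
      have : s(v, u) ∈ CS :=
        memCS v u hadj.symm (hpi1 hjk) (fun hc => hpi (fun h => hc))
      rwa [Sym2.eq_swap] at this
  -- choose the edges
  set junk : Sym2 (Fin k × Fin k) := s(((⟨0, hk0⟩ : Fin k), (⟨0, hk0⟩ : Fin k)),
    ((⟨0, hk0⟩ : Fin k), (⟨0, hk0⟩ : Fin k))) with hjunk
  set fcol : Fin k → Sym2 (Fin k × Fin k) :=
    fun j => if h : colMixed j then (colEdge j h).choose else junk with hfcol
  set frow : Fin k → Sym2 (Fin k × Fin k) :=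
    fun i => if h : rowMixed i then (rowEdge i h).choose else junk with hfrow
  have fcol_spec : ∀ j, colMixed j → fcol j ∈ CS ∧ ∃ i : ℕ, ∃ h : i + 1 < k,
      fcol j = s(((⟨i, by omega⟩ : Fin k), j), ((⟨i+1, h⟩ : Fin k), j)) := by
    intro j hj
    have := (colEdge j hj).choose_spec
    simp only [hfcol, dif_pos hj]
    exact this
  have frow_spec : ∀ i, rowMixed i → frow i ∈ CS ∧ ∃ j : ℕ, ∃ h : j + 1 < k,
      frow i = s((i, (⟨j, by omega⟩ : Fin k)), (i, (⟨j+1, h⟩ : Fin k))) := by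
    intro i hi
    have := (rowEdge i hi).choose_spec
    simp only [hfrow, dif_pos hi]
    exact this
  set MC : Finset (Fin k) := Finset.univ.filter colMixed with hMC
  set MR : Finset (Fin k) := Finset.univ.filter rowMixed with hMR
  set F : Finset (Sym2 (Fin k × Fin k)) := MC.image fcol ∪ MR.image frow with hF
  -- injectivity on MC
  have fcol_inj : Set.InjOn fcol MC := by
    intro j1 hj1 j2 hj2 heq
    obtain ⟨-, i1, hi1, e1⟩ := fcol_spec j1 (by simpa [hMC] using hj1)
    obtain ⟨-, i2, hi2, e2⟩ := fcol_spec j2 (by simpa [hMC] using hj2)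
    rw [e1, e2, Sym2.eq_iff] at heq
    rcases heq with ⟨h, -⟩ | ⟨h, -⟩ <;> exact congrArg Prod.snd h
  have frow_inj : Set.InjOn frow MR := by
    intro j1 hj1 j2 hj2 heq
    obtain ⟨-, i1, hi1, e1⟩ := frow_spec j1 (by simpa [hMR] using hj1)
    obtain ⟨-, i2, hi2, e2⟩ := frow_spec j2 (by simpa [hMR] using hj2)
    rw [e1, e2, Sym2.eq_iff] at heq
    rcases heq with ⟨h, -⟩ | ⟨h, -⟩ <;> exact congrArg Prod.fst h
  -- disjointness of the two images
  have hdisj : Disjoint (MC.image fcol) (MR.image frow) := by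
    rw [Finset.disjoint_left]
    intro e he1 he2
    obtain ⟨j, hj, hje⟩ := Finset.mem_image.mp he1
    obtain ⟨i, hi, hie⟩ := Finset.mem_image.mp he2
    obtain ⟨-, a, ha, ea⟩ := fcol_spec j (by simpa [hMC] using hj)
    obtain ⟨-, b, hb, eb⟩ := frow_spec i (by simpa [hMR] using hi)
    rw [hje] at ea
    rw [hie] at eb
    rw [ea, Sym2.eq_iff] at eb
    rcases eb with ⟨h1, h2⟩ | ⟨h1, h2⟩ <;>
    · have c1 := congrArg (fun p => (Prod.fst p).val) h1
      have c2 := congrArg (fun p => (Prod.fst p).val) h2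
      simp at c1 c2
      omega
  -- F consists of cut edges
  have hFsub : (↑F : Set (Sym2 (Fin k × Fin k))) ⊆ CS := by
    intro e he
    simp only [hF, Finset.coe_union, Set.mem_union, Finset.coe_image, Set.mem_image] at he
    rcases he with ⟨j, hj, hje⟩ | ⟨i, hi, hie⟩
    · exact hje ▸ (fcol_spec j (by simpa [hMC] using hj)).1
    · exact hie ▸ (frow_spec i (by simpa [hMR] using hi)).1
  have hcard : F.card = MC.card + MR.card := by
    rw [hF, Finset.card_union_of_disjoint hdisj,
      Finset.card_image_of_injOn fcol_inj, Finset.card_image_of_injOn frow_inj]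
  have hmain : MC.card + MR.card ≤ CS.ncard := by
    rw [← hcard, ← Set.ncard_coe_finset]
    exact Set.ncard_le_ncard hFsub (Set.toFinite _)
  -- now the counting in the top row
  set r0 : Fin k := ⟨0, hk0⟩ with hr0
  set a := (Finset.univ.filter (fun j : Fin k => (r0, j) ∈ A)).card with hadef
  set b := (Finset.univ.filter (fun j : Fin k => ¬ (r0, j) ∈ A)).card with hbdef
  have hab : a + b = k := by
    rw [hadef, hbdef, Finset.card_filter_add_card_filter_not]
    simp
  have topcount : ∀ (S : Set (Fin k × Fin k)), {u ∈ S | u.1.val = 0}.ncard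
      = (Finset.univ.filter (fun j : Fin k => (r0, j) ∈ S)).card := by
    intro S
    have e1 : {u ∈ S | u.1.val = 0} = (fun j => (r0, j)) '' {j | (r0, j) ∈ S} := by
      ext ⟨i, j⟩
      simp only [Set.mem_setOf_eq, Set.mem_image, Set.mem_sep_iff]
      constructor
      · rintro ⟨hmem, h0⟩
        have hi : i = r0 := Fin.ext h0
        exact ⟨j, by rw [← hi]; exact hmem, by rw [hi]⟩
      · rintro ⟨j', hj', heq⟩
        rw [Prod.mk.injEq] at heq
        obtain ⟨h1, h2⟩ := heq
        subst h2
        rw [← h1]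
        exact ⟨hj', rfl⟩
    have e2 : {j : Fin k | (r0, j) ∈ S} = ↑(Finset.univ.filter fun j : Fin k => (r0, j) ∈ S) := by
      ext j; simp
    rw [e1, Set.ncard_image_of_injective _ (Prod.mk_right_injective r0), e2, Set.ncard_coe_finset]
  have hacount : {u ∈ A | u.1.val = 0}.ncard = a := topcount A
  have hbcount : {u ∈ B | u.1.val = 0}.ncard = b := by
    rw [topcount B, hbdef]
    congr 1
    exact Finset.filter_congr (fun j _ => by rw [hAB])
  -- the key combinatorial inequality
  have hkey : min a b + 1 ≤ MC.card + MR.card := by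
    have hminab : min a b ≤ a ∧ min a b ≤ b := ⟨min_le_left _ _, min_le_right _ _⟩
    by_cases hFA : ∃ j, ∀ i : Fin k, (i, j) ∈ A
    · by_cases hFB : ∃ j, ∀ i : Fin k, (i, j) ∉ A
      · -- all rows are mixed
        obtain ⟨jA, hjA⟩ := hFA
        obtain ⟨jB, hjB⟩ := hFB
        have hMRu : MR = Finset.univ := by
          refine Finset.eq_univ_iff_forall.mpr fun i =>
            Finset.mem_filter.mpr ⟨Finset.mem_univ _, ⟨jA, jB, hjA i, hjB i⟩⟩
        have : MR.card = k := by rw [hMRu, Finset.card_univ, Fintype.card_fin]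
        omega
      · -- every top-B column is mixed, and at least one row is mixed
        obtain ⟨jA, hjA⟩ := hFA
        push_neg at hFB
        have hMR1 : 1 ≤ MR.card := by
          obtain ⟨v, hv⟩ := hB
          have hv' : v ∉ A := (hAB v).mp hv
          refine Finset.card_pos.mpr ⟨v.1, Finset.mem_filter.mpr ⟨Finset.mem_univ _,
            ⟨jA, v.2, hjA v.1, by simpa using hv'⟩⟩⟩
        have hMCb : b ≤ MC.card := by
          refine Finset.card_le_card fun j hj => ?_
          rw [Finset.mem_filter] at hj
          obtain ⟨i, hi⟩ := hFB j
          exact Finset.mem_filter.mpr ⟨Finset.mem_univ _, ⟨i, r0, hi, hj.2⟩⟩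
        omega
    · by_cases hFB : ∃ j, ∀ i : Fin k, (i, j) ∉ A
      · -- every top-A column is mixed, and at least one row is mixed
        obtain ⟨jB, hjB⟩ := hFB
        push_neg at hFA
        have hMR1 : 1 ≤ MR.card := by
          obtain ⟨v, hv⟩ := hA
          refine Finset.card_pos.mpr ⟨v.1, Finset.mem_filter.mpr ⟨Finset.mem_univ _,
            ⟨v.2, jB, by simpa using hv, hjB v.1⟩⟩⟩
        have hMCa : a ≤ MC.card := by
          refine Finset.card_le_card fun j hj => ?_
          rw [Finset.mem_filter] at hj
          obtain ⟨i, hi⟩ := hFA j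
          exact Finset.mem_filter.mpr ⟨Finset.mem_univ _, ⟨r0, i, hj.2, hi⟩⟩
        omega
      · -- every column is mixed
        push_neg at hFA hFB
        have hMCu : MC = Finset.univ := by
          refine Finset.eq_univ_iff_forall.mpr fun j => ?_
          obtain ⟨i1, hi1⟩ := hFB j
          obtain ⟨i2, hi2⟩ := hFA j
          exact Finset.mem_filter.mpr ⟨Finset.mem_univ _, ⟨i1, i2, hi1, hi2⟩⟩
        have : MC.card = k := by rw [hMCu, Finset.card_univ, Fintype.card_fin]
        omega
  rw [hacount, hbcount]
  exact hkey.trans hmain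
end

section
/- Let $k \ge 2$ and let $Z$ be the $k \times k$ grid graph with $\Gamma$ the set of vertices of its first row. Let $(A,B)$ be any partition of the vertex set of $Z$, and write $\Gamma_A = \Gamma\cap A$, $\Gamma_B = \Gamma\cap B$. If $|\Gamma_B| \le |\Gamma_A|$, then $|B| \le 4\,|E(A,B)|^2$, where $E(A,B)$ is the set of edges of $Z$ with one endpoint in $A$ and one in $B$. -/
private lemma nat_ivt (f : ℕ → Prop) : ∀ n a, ¬ f a → f (a + n) →
    ∃ i, a ≤ i ∧ i + 1 ≤ a + n ∧ ¬ f i ∧ f (i + 1) := by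
  intro n
  induction n with
  | zero => intro a h h'; exact absurd h' h
  | succ n ih =>
    intro a h h'
    by_cases hf : f (a + n)
    · obtain ⟨i, h1, h2, h3, h4⟩ := ih a h hf
      exact ⟨i, h1, by omega, h3, h4⟩
    · exact ⟨a + n, by omega, by omega, hf, by rwa [show a + n + 1 = a + (n + 1) by omega]⟩

private lemma ivt2 (f : ℕ → Prop) {a b : ℕ} (ha : ¬ f a) (hb : f b) :
    ∃ i, i + 1 ≤ max a b ∧ ((¬ f i ∧ f (i + 1)) ∨ (f i ∧ ¬ f (i + 1))) := by
  rcases le_total a b with h | h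
  · obtain ⟨i, h1, h2, h3, h4⟩ := nat_ivt f (b - a) a ha (by rwa [Nat.add_sub_cancel' h])
    exact ⟨i, by omega, Or.inl ⟨h3, h4⟩⟩
  · obtain ⟨i, h1, h2, h3, h4⟩ := nat_ivt (fun n => ¬ f n) (a - b) b (not_not_intro hb)
      (by rw [Nat.add_sub_cancel' h]; exact ha)
    exact ⟨i, by omega, Or.inr ⟨not_not.mp h3, h4⟩⟩

private lemma col_cut {k : ℕ} {A B : Set (Fin k × Fin k)} (hU : A ∪ B = Set.univ)
    (hd : Disjoint A B) {j : Fin k} {p q : Fin k × Fin k}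
    (hp : p ∈ A) (hq : q ∈ B) (hpj : p.2 = j) (hqj : q.2 = j) :
    ∃ u v : Fin k × Fin k, u.2 = j ∧ v.2 = j ∧ s(u, v) ∈ cutSet (gridGraph k) A B := by
  classical
  have hmem : ∀ x : Fin k × Fin k, x ∉ B → x ∈ A := by
    intro x hx
    have hx' : x ∈ A ∨ x ∈ B := (Set.mem_union x A B).mp (hU ▸ Set.mem_univ x)
    tauto
  set f : ℕ → Prop := fun n => ∃ h : n < k, ((⟨n, h⟩ : Fin k), j) ∈ B with hf
  have hfa : ¬ f p.1.val := by
    rintro ⟨h, hm⟩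
    have : ((⟨p.1.val, h⟩ : Fin k), j) = p := by
      rw [← hpj]
    rw [this] at hm
    exact (Set.disjoint_left.mp hd hp) hm
  have hfb : f q.1.val := by
    refine ⟨q.1.isLt, ?_⟩
    have : ((⟨q.1.val, q.1.isLt⟩ : Fin k), j) = q := by
      rw [← hqj]
    rw [this]; exact hq
  obtain ⟨i, hile, hcase⟩ := ivt2 f hfa hfb
  have hik : i + 1 < k := lt_of_le_of_lt hile (max_lt p.1.isLt q.1.isLt)
  rcases hcase with ⟨h1, h2⟩ | ⟨h1, h2⟩
  · -- (i,j) ∈ A, (i+1,j) ∈ B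
    set u : Fin k × Fin k := ((⟨i, by omega⟩ : Fin k), j)
    set v : Fin k × Fin k := ((⟨i + 1, hik⟩ : Fin k), j)
    have hvB : v ∈ B := h2.choose_spec
    have huA : u ∈ A := hmem u (fun h => h1 ⟨by omega, h⟩)
    exact ⟨u, v, rfl, rfl, u, v, Or.inr ⟨rfl, Or.inl rfl⟩, huA, hvB, rfl⟩
  · -- (i,j) ∈ B, (i+1,j) ∈ A
    set v : Fin k × Fin k := ((⟨i, by omega⟩ : Fin k), j)
    set u : Fin k × Fin k := ((⟨i + 1, hik⟩ : Fin k), j)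
    have hvB : v ∈ B := h1.choose_spec
    have huA : u ∈ A := hmem u (fun h => h2 ⟨hik, h⟩)
    exact ⟨u, v, rfl, rfl, u, v, Or.inr ⟨rfl, Or.inr rfl⟩, huA, hvB, rfl⟩

private lemma row_cut {k : ℕ} {A B : Set (Fin k × Fin k)} (hU : A ∪ B = Set.univ)
    (hd : Disjoint A B) {i : Fin k} {p q : Fin k × Fin k}
    (hp : p ∈ A) (hq : q ∈ B) (hpi : p.1 = i) (hqi : q.1 = i) :
    ∃ u v : Fin k × Fin k, u.1 = i ∧ v.1 = i ∧ s(u, v) ∈ cutSet (gridGraph k) A B := by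
  classical
  have hmem : ∀ x : Fin k × Fin k, x ∉ B → x ∈ A := by
    intro x hx
    have hx' : x ∈ A ∨ x ∈ B := (Set.mem_union x A B).mp (hU ▸ Set.mem_univ x)
    tauto
  set f : ℕ → Prop := fun n => ∃ h : n < k, (i, (⟨n, h⟩ : Fin k)) ∈ B with hf
  have hfa : ¬ f p.2.val := by
    rintro ⟨h, hm⟩
    have : (i, (⟨p.2.val, h⟩ : Fin k)) = p := by
      rw [← hpi]
    rw [this] at hm
    exact (Set.disjoint_left.mp hd hp) hm
  have hfb : f q.2.val := by
    refine ⟨q.2.isLt, ?_⟩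
    have : (i, (⟨q.2.val, q.2.isLt⟩ : Fin k)) = q := by
      rw [← hqi]
    rw [this]; exact hq
  obtain ⟨m, hile, hcase⟩ := ivt2 f hfa hfb
  have hik : m + 1 < k := lt_of_le_of_lt hile (max_lt p.2.isLt q.2.isLt)
  rcases hcase with ⟨h1, h2⟩ | ⟨h1, h2⟩
  · set u : Fin k × Fin k := (i, (⟨m, by omega⟩ : Fin k))
    set v : Fin k × Fin k := (i, (⟨m + 1, hik⟩ : Fin k))
    have hvB : v ∈ B := h2.choose_spec
    have huA : u ∈ A := hmem u (fun h => h1 ⟨by omega, h⟩)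
    exact ⟨u, v, rfl, rfl, u, v, Or.inl ⟨rfl, Or.inl rfl⟩, huA, hvB, rfl⟩
  · set v : Fin k × Fin k := (i, (⟨m, by omega⟩ : Fin k))
    set u : Fin k × Fin k := (i, (⟨m + 1, hik⟩ : Fin k))
    have hvB : v ∈ B := h1.choose_spec
    have huA : u ∈ A := hmem u (fun h => h2 ⟨hik, h⟩)
    exact ⟨u, v, rfl, rfl, u, v, Or.inl ⟨rfl, Or.inr rfl⟩, huA, hvB, rfl⟩

private lemma mixed_cols_le {k : ℕ} {A B : Set (Fin k × Fin k)} (hU : A ∪ B = Set.univ)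
    (hd : Disjoint A B) :
    {j : Fin k | (∃ p ∈ A, p.2 = j) ∧ (∃ q ∈ B, q.2 = j)}.ncard
      ≤ (cutSet (gridGraph k) A B).ncard := by
  classical
  have key : ∀ j : Fin k, j ∈ {j : Fin k | (∃ p ∈ A, p.2 = j) ∧ (∃ q ∈ B, q.2 = j)} →
      ∃ u v : Fin k × Fin k, u.2 = j ∧ v.2 = j ∧ s(u, v) ∈ cutSet (gridGraph k) A B := by
    rintro j ⟨⟨p, hp, hpj⟩, ⟨q, hq, hqj⟩⟩
    exact col_cut hU hd hp hq hpj hqj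
  choose! u v hu hv he using key
  refine Set.ncard_le_ncard_of_injOn (fun j => s(u j, v j)) (fun j hj => he j hj) ?_
    (Set.toFinite _)
  intro j hj j' hj' hEq
  rcases Sym2.eq_iff.mp hEq with ⟨h1, -⟩ | ⟨h1, -⟩
  · rw [← hu j hj, ← hu j' hj', h1]
  · rw [← hu j hj, ← hv j' hj', h1]

private lemma mixed_rows_le {k : ℕ} {A B : Set (Fin k × Fin k)} (hU : A ∪ B = Set.univ)
    (hd : Disjoint A B) :
    {i : Fin k | (∃ p ∈ A, p.1 = i) ∧ (∃ q ∈ B, q.1 = i)}.ncard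
      ≤ (cutSet (gridGraph k) A B).ncard := by
  classical
  have key : ∀ i : Fin k, i ∈ {i : Fin k | (∃ p ∈ A, p.1 = i) ∧ (∃ q ∈ B, q.1 = i)} →
      ∃ u v : Fin k × Fin k, u.1 = i ∧ v.1 = i ∧ s(u, v) ∈ cutSet (gridGraph k) A B := by
    rintro i ⟨⟨p, hp, hpi⟩, ⟨q, hq, hqi⟩⟩
    exact row_cut hU hd hp hq hpi hqi
  choose! u v hu hv he using key
  refine Set.ncard_le_ncard_of_injOn (fun i => s(u i, v i)) (fun i hi => he i hi) ?_
    (Set.toFinite _)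
  intro i hi i' hi' hEq
  rcases Sym2.eq_iff.mp hEq with ⟨h1, -⟩ | ⟨h1, -⟩
  · rw [← hu i hi, ← hu i' hi', h1]
  · rw [← hu i hi, ← hv i' hi', h1]

private lemma ncard_prod' {α β : Type*} (s : Set α) (t : Set β) :
    (s ×ˢ t).ncard = s.ncard * t.ncard := by
  rw [← Nat.card_coe_set_eq, ← Nat.card_coe_set_eq, ← Nat.card_coe_set_eq,
    Nat.card_congr (Equiv.Set.prod s t), Nat.card_prod]

/-- Claim: in the `k × k` grid (`k ≥ 2`) with first row `Γ`, for any partition `(A, B)`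
of the vertices with `|Γ ∩ B| ≤ |Γ ∩ A|`, we have `|B| ≤ 4 |E(A,B)|²`. -/
theorem grid_small_side_bound (k : ℕ) (hk : 2 ≤ k) (A B : Set (Fin k × Fin k))
    (hU : A ∪ B = Set.univ) (hd : Disjoint A B)
    (hΓ : {u ∈ B | u.1.val = 0}.ncard ≤ {u ∈ A | u.1.val = 0}.ncard) :
    B.ncard ≤ 4 * (cutSet (gridGraph k) A B).ncard ^ 2 := by
  classical
  set c := (cutSet (gridGraph k) A B).ncard with hc
  have hmem : ∀ x : Fin k × Fin k, x ∉ B → x ∈ A := by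
    intro x hx
    have hx' : x ∈ A ∨ x ∈ B := (Set.mem_union x A B).mp (hU ▸ Set.mem_univ x)
    tauto
  have hmem' : ∀ x : Fin k × Fin k, x ∉ A → x ∈ B := by
    intro x hx
    have hx' : x ∈ A ∨ x ∈ B := (Set.mem_union x A B).mp (hU ▸ Set.mem_univ x)
    tauto
  have hBuniv : B.ncard ≤ k * k := by
    calc B.ncard ≤ (Set.univ : Set (Fin k × Fin k)).ncard :=
          Set.ncard_le_ncard (Set.subset_univ B) (Set.toFinite _)
      _ = k * k := by simp [Set.ncard_univ, Nat.card_eq_fintype_card]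
  have hz : (0 : ℕ) < k := by omega
  set z : Fin k := ⟨0, hz⟩ with hzdef
  by_cases hcolA : ∀ j : Fin k, ∃ q ∈ B, q.2 = j
  · -- no all-A column: every column meets B; each top-A column is mixed
    have hsub : {j : Fin k | (z, j) ∈ A} ⊆
        {j : Fin k | (∃ p ∈ A, p.2 = j) ∧ (∃ q ∈ B, q.2 = j)} := by
      intro j hj
      exact ⟨⟨(z, j), hj, rfl⟩, hcolA j⟩
    have hA1 : {j : Fin k | (z, j) ∈ A}.ncard ≤ c :=
      le_trans (Set.ncard_le_ncard hsub (Set.toFinite _)) (mixed_cols_le hU hd)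
    -- relate ΓA, ΓB to column sets
    have himA : {u ∈ A | u.1.val = 0} = (fun j => (z, j)) '' {j : Fin k | (z, j) ∈ A} := by
      ext u
      constructor
      · rintro ⟨huA, hu0⟩
        refine ⟨u.2, ?_, ?_⟩
        · show (z, u.2) ∈ A
          have : (z, u.2) = u := Prod.ext (Fin.ext hu0.symm) rfl
          rwa [this]
        · exact Prod.ext (Fin.ext hu0.symm) rfl
      · rintro ⟨j, hj, rfl⟩
        exact ⟨hj, rfl⟩
    have himB : {u ∈ B | u.1.val = 0} = (fun j => (z, j)) '' {j : Fin k | (z, j) ∈ B} := by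
      ext u
      constructor
      · rintro ⟨huB, hu0⟩
        refine ⟨u.2, ?_, ?_⟩
        · show (z, u.2) ∈ B
          have : (z, u.2) = u := Prod.ext (Fin.ext hu0.symm) rfl
          rwa [this]
        · exact Prod.ext (Fin.ext hu0.symm) rfl
      · rintro ⟨j, hj, rfl⟩
        exact ⟨hj, rfl⟩
    have hinj : Function.Injective (fun j : Fin k => (z, j)) := by
      intro a b hab
      exact congrArg Prod.snd hab
    have hcover : {j : Fin k | (z, j) ∈ A} ∪ {j : Fin k | (z, j) ∈ B} = Set.univ := by
      ext j
      simp only [Set.mem_union, Set.mem_setOf_eq, Set.mem_univ, iff_true]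
      by_cases h : (z, j) ∈ A
      · exact Or.inl h
      · exact Or.inr (hmem' _ h)
    have hdisj : Disjoint {j : Fin k | (z, j) ∈ A} {j : Fin k | (z, j) ∈ B} := by
      rw [Set.disjoint_left]
      intro j hj hj'
      exact (Set.disjoint_left.mp hd hj) hj'
    have hsum : {j : Fin k | (z, j) ∈ A}.ncard + {j : Fin k | (z, j) ∈ B}.ncard = k := by
      rw [← Set.ncard_union_eq hdisj (Set.toFinite _) (Set.toFinite _), hcover]
      simp [Set.ncard_univ]
    have hΓ' : {j : Fin k | (z, j) ∈ B}.ncard ≤ {j : Fin k | (z, j) ∈ A}.ncard := by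
      rwa [himA, himB, Set.ncard_image_of_injective _ hinj,
        Set.ncard_image_of_injective _ hinj] at hΓ
    have hk2c : k ≤ 2 * c := by omega
    calc B.ncard ≤ k * k := hBuniv
      _ ≤ (2 * c) * (2 * c) := Nat.mul_le_mul hk2c hk2c
      _ = 4 * c ^ 2 := by ring
  · -- there is an all-A column j1
    push_neg at hcolA
    obtain ⟨j1, hj1⟩ := hcolA
    have hj1A : ∀ i : Fin k, (i, j1) ∈ A := by
      intro i
      by_contra h
      exact hj1 (i, j1) (hmem' _ h) rfl
    by_cases hcolB : ∀ j : Fin k, ∃ p ∈ A, p.2 = j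
    · -- no all-B column: B ⊆ mixedRows × mixedCols
      set MR := {i : Fin k | (∃ p ∈ A, p.1 = i) ∧ (∃ q ∈ B, q.1 = i)} with hMR
      set MC := {j : Fin k | (∃ p ∈ A, p.2 = j) ∧ (∃ q ∈ B, q.2 = j)} with hMC
      have hBsub : B ⊆ MR ×ˢ MC := by
        intro u hu
        refine ⟨⟨⟨(u.1, j1), hj1A u.1, rfl⟩, ⟨u, hu, rfl⟩⟩, ⟨hcolB u.2, ⟨u, hu, rfl⟩⟩⟩
      calc B.ncard ≤ (MR ×ˢ MC).ncard := Set.ncard_le_ncard hBsub (Set.toFinite _)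
        _ = MR.ncard * MC.ncard := ncard_prod' MR MC
        _ ≤ c * c := Nat.mul_le_mul (mixed_rows_le hU hd) (mixed_cols_le hU hd)
        _ ≤ 4 * c ^ 2 := by nlinarith
    · -- there is an all-B column j0: every row is mixed
      push_neg at hcolB
      obtain ⟨j0, hj0⟩ := hcolB
      have hj0B : ∀ i : Fin k, (i, j0) ∈ B := by
        intro i
        by_contra h
        exact hj0 (i, j0) (hmem _ h) rfl
      have hMRuniv : {i : Fin k | (∃ p ∈ A, p.1 = i) ∧ (∃ q ∈ B, q.1 = i)} = Set.univ := by
        ext i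
        simp only [Set.mem_setOf_eq, Set.mem_univ, iff_true]
        exact ⟨⟨(i, j1), hj1A i, rfl⟩, ⟨(i, j0), hj0B i, rfl⟩⟩
      have hkc : k ≤ c := by
        have := mixed_rows_le hU hd (A := A) (B := B)
        rw [hMRuniv] at this
        simpa [Set.ncard_univ] using this
      calc B.ncard ≤ k * k := hBuniv
        _ ≤ c * c := Nat.mul_le_mul hkc hkc
        _ ≤ 4 * c ^ 2 := by nlinarith
end

section
/- Let $h \ge 1$ and let $R$ be the grid graph with $h+1$ rows, numbered $0$ (bottom) through $h$ (top), and $2h$ columns, numbered $1$ through $2h$. Then there exists a family of paths $P_1,\dots,P_{2h}$ in $R$ such that, for each $1 \le j \le 2h$, the path $P_j$ connects the bottom-row vertex in column $j$ to the top-row vertex in column $\lceil j/2 \rceil$, and every edge of $R$ belongs to at most $2$ of the paths $P_1,\dots,P_{2h}$. -/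
open SimpleGraph Walk

def upW {m n : ℕ} (c : Fin n) : (a k : ℕ) → (hk : a + k < m) →
    (rectGrid m n).Walk (⟨a, by omega⟩, c) (⟨a + k, by omega⟩, c)
  | _, 0, _ => Walk.nil
  | a, k+1, hk => (upW c a k (by omega)).concat (show (rectGrid m n).Adj _ _ from Or.inr ⟨rfl, Or.inl rfl⟩)

def leftW {m n : ℕ} (r : Fin m) : (b k : ℕ) → (hk : b + k < n) →
    (rectGrid m n).Walk (r, ⟨b + k, by omega⟩) (r, ⟨b, by omega⟩)
  | _, 0, _ => Walk.nil
  | b, k+1, hk => Walk.cons (v := (r, ⟨b + k, by omega⟩)) (show (rectGrid m n).Adj _ _ from Or.inl ⟨rfl, Or.inr rfl⟩) (leftW r b k (by omega))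

lemma upW_support {m n : ℕ} (c : Fin n) (a k : ℕ) (hk : a + k < m) (v : Fin m × Fin n) :
    v ∈ (upW c a k hk).support ↔ v.2 = c ∧ a ≤ v.1.val ∧ v.1.val ≤ a + k := by
  induction k with
  | zero =>
    simp only [upW, Walk.support_nil, List.mem_singleton, Prod.ext_iff, Fin.ext_iff]
    omega
  | succ k ih =>
    simp only [upW, Walk.support_concat, List.concat_eq_append, List.mem_append,
      List.mem_singleton, ih (by omega), Prod.ext_iff, Fin.ext_iff]
    omega

lemma leftW_support {m n : ℕ} (r : Fin m) (b k : ℕ) (hk : b + k < n) (v : Fin m × Fin n) :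
    v ∈ (leftW r b k hk).support ↔ v.1 = r ∧ b ≤ v.2.val ∧ v.2.val ≤ b + k := by
  induction k with
  | zero =>
    simp only [leftW, Walk.support_nil, List.mem_singleton, Prod.ext_iff, Fin.ext_iff]
    omega
  | succ k ih =>
    simp only [leftW, Walk.support_cons, List.mem_cons, ih (by omega), Prod.ext_iff,
      Fin.ext_iff]
    omega

lemma upW_edges {m n : ℕ} (c : Fin n) (a k : ℕ) (hk : a + k < m) (e)
    (he : e ∈ (upW c a k hk).edges) :
    ∃ u w : Fin m, e = s((u, c), (w, c)) ∧ a ≤ u.val ∧ u.val + 1 = w.val ∧ w.val ≤ a + k := by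
  induction k with
  | zero => simp [upW] at he
  | succ k ih =>
    rw [upW, Walk.edges_concat, List.concat_eq_append, List.mem_append] at he
    rcases he with he | he
    · obtain ⟨u, w, h1, h2, h3, h4⟩ := ih (by omega) he
      exact ⟨u, w, h1, h2, h3, by omega⟩
    · rw [List.mem_singleton] at he
      exact ⟨⟨a + k, by omega⟩, ⟨a + k + 1, by omega⟩, he, Nat.le_add_right a k, rfl,
        Nat.le_refl _⟩

lemma leftW_edges {m n : ℕ} (r : Fin m) (b k : ℕ) (hk : b + k < n) (e)
    (he : e ∈ (leftW r b k hk).edges) :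
    ∃ u w : Fin n, e = s((r, u), (r, w)) ∧ b ≤ u.val ∧ u.val + 1 = w.val ∧ w.val ≤ b + k := by
  induction k with
  | zero => simp [leftW] at he
  | succ k ih =>
    rw [leftW, Walk.edges_cons, List.mem_cons] at he
    rcases he with he | he
    · refine ⟨⟨b + k, by omega⟩, ⟨b + k + 1, by omega⟩, ?_, Nat.le_add_right b k, rfl,
        Nat.le_refl _⟩
      rw [he]; exact Sym2.eq_swap
    · obtain ⟨u, w, h1, h2, h3, h4⟩ := ih (by omega) he
      exact ⟨u, w, h1, h2, h3, by omega⟩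

lemma upW_isPath {m n : ℕ} (c : Fin n) (a k : ℕ) (hk : a + k < m) :
    (upW c a k hk).IsPath := by
  induction k with
  | zero => exact Walk.IsPath.nil
  | succ k ih =>
    rw [upW, Walk.isPath_def, Walk.support_concat]
    refine List.Nodup.append ((ih (by omega)).2) (List.nodup_singleton _) ?_
    intro x hx hx'
    rw [List.mem_singleton] at hx'
    rw [upW_support] at hx
    subst hx'
    simp at hx

lemma leftW_isPath {m n : ℕ} (r : Fin m) (b k : ℕ) (hk : b + k < n) :
    (leftW r b k hk).IsPath := by
  induction k with
  | zero => exact Walk.IsPath.nil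
  | succ k ih =>
    rw [leftW]
    refine Walk.IsPath.cons (ih (by omega)) ?_
    rw [leftW_support]
    simp

lemma zero_lt_aux (h : ℕ) : 0 < h + 1 + 0 := by omega

lemma h_lt_aux (h : ℕ) : h < h + 1 + 0 := by omega

lemma half_lt_aux {h : ℕ} (j : Fin (2 * h)) : j.val / 2 < 2 * h + 0 := by have := j.isLt; omega

def seg1 (h : ℕ) (hh : 1 ≤ h) (j : Fin (2 * h)) :
    (rectGrid (h + 1) (2 * h)).Walk (⟨0, zero_lt_aux h⟩, j)
      (⟨j.val / 2 + 1, by have := j.isLt; omega⟩, j) :=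
  (upW j 0 (j.val / 2 + 1) (by have := j.isLt; omega)).copy rfl
    (by rw [Prod.mk.injEq]; exact ⟨Fin.ext (by simp), rfl⟩)

def seg2 (h : ℕ) (hh : 1 ≤ h) (j : Fin (2 * h)) :
    (rectGrid (h + 1) (2 * h)).Walk (⟨j.val / 2 + 1, by have := j.isLt; omega⟩, j)
      (⟨j.val / 2 + 1, by have := j.isLt; omega⟩, ⟨j.val / 2, half_lt_aux j⟩) :=
  (leftW ⟨j.val / 2 + 1, by have := j.isLt; omega⟩ (j.val / 2) (j.val - j.val / 2)
    (by have := j.isLt; omega)).copy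
      (by rw [Prod.mk.injEq]; exact ⟨rfl, Fin.ext (by have := j.isLt; simp; omega)⟩) rfl

def seg3 (h : ℕ) (hh : 1 ≤ h) (j : Fin (2 * h)) :
    (rectGrid (h + 1) (2 * h)).Walk
      (⟨j.val / 2 + 1, by have := j.isLt; omega⟩, ⟨j.val / 2, half_lt_aux j⟩)
      (⟨h, h_lt_aux h⟩, ⟨j.val / 2, half_lt_aux j⟩) :=
  (upW ⟨j.val / 2, half_lt_aux j⟩ (j.val / 2 + 1) (h - (j.val / 2 + 1))
    (by have := j.isLt; omega)).copy rfl
      (by rw [Prod.mk.injEq]; exact ⟨Fin.ext (by have := j.isLt; simp; omega), rfl⟩)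

def route (h : ℕ) (hh : 1 ≤ h) (j : Fin (2 * h)) :
    (rectGrid (h + 1) (2 * h)).Walk (⟨0, zero_lt_aux h⟩, j)
      (⟨h, h_lt_aux h⟩, ⟨j.val / 2, half_lt_aux j⟩) :=
  ((seg1 h hh j).append (seg2 h hh j)).append (seg3 h hh j)

lemma mem_seg1 {h : ℕ} (hh : 1 ≤ h) (j : Fin (2 * h)) (x) (hx : x ∈ (seg1 h hh j).support) :
    x.2 = j ∧ x.1.val ≤ j.val / 2 + 1 := by
  rw [seg1, Walk.support_copy, upW_support] at hx
  exact ⟨hx.1, by omega⟩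

lemma mem_seg2 {h : ℕ} (hh : 1 ≤ h) (j : Fin (2 * h)) (x) (hx : x ∈ (seg2 h hh j).support) :
    x.1.val = j.val / 2 + 1 ∧ j.val / 2 ≤ x.2.val ∧ x.2.val ≤ j.val := by
  rw [seg2, Walk.support_copy, leftW_support] at hx
  obtain ⟨h1, h2, h3⟩ := hx
  refine ⟨by rw [h1], h2, by omega⟩

lemma mem_seg3 {h : ℕ} (hh : 1 ≤ h) (j : Fin (2 * h)) (x) (hx : x ∈ (seg3 h hh j).support) :
    x.2.val = j.val / 2 ∧ j.val / 2 + 1 ≤ x.1.val := by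
  rw [seg3, Walk.support_copy, upW_support] at hx
  obtain ⟨h1, h2, h3⟩ := hx
  exact ⟨by rw [h1], h2⟩

lemma seg1_isPath {h : ℕ} (hh : 1 ≤ h) (j : Fin (2 * h)) : (seg1 h hh j).IsPath := by
  rw [seg1, Walk.isPath_copy]; exact upW_isPath _ _ _ _

lemma seg2_isPath {h : ℕ} (hh : 1 ≤ h) (j : Fin (2 * h)) : (seg2 h hh j).IsPath := by
  rw [seg2, Walk.isPath_copy]; exact leftW_isPath _ _ _ _

lemma seg3_isPath {h : ℕ} (hh : 1 ≤ h) (j : Fin (2 * h)) : (seg3 h hh j).IsPath := by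
  rw [seg3, Walk.isPath_copy]; exact upW_isPath _ _ _ _

lemma route_isPath (h : ℕ) (hh : 1 ≤ h) (j : Fin (2 * h)) : (route h hh j).IsPath := by
  have hj := j.isLt
  have hd2 : ((seg2 h hh j).support).Nodup := (seg2_isPath hh j).2
  have hd3 : ((seg3 h hh j).support).Nodup := (seg3_isPath hh j).2
  have hhead2 : (seg2 h hh j).support
      = (⟨j.val / 2 + 1, by omega⟩, j) :: (seg2 h hh j).support.tail :=
    Walk.support_eq_cons _
  have hhead3 : (seg3 h hh j).support
      = (⟨j.val / 2 + 1, by omega⟩, ⟨j.val / 2, by omega⟩) :: (seg3 h hh j).support.tail :=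
    Walk.support_eq_cons _
  -- facts about tail membership
  have ht2 : ∀ x ∈ (seg2 h hh j).support.tail,
      x ∈ (seg2 h hh j).support ∧ x ≠ (⟨j.val / 2 + 1, by omega⟩, j) := by
    intro x hx
    constructor
    · rw [hhead2]; exact List.mem_cons_of_mem _ hx
    · rintro rfl
      rw [hhead2] at hd2
      exact hd2.notMem hx
  have ht3 : ∀ x ∈ (seg3 h hh j).support.tail,
      x ∈ (seg3 h hh j).support
        ∧ x ≠ (⟨j.val / 2 + 1, by omega⟩, ⟨j.val / 2, by omega⟩) := by
    intro x hx
    constructor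
    · rw [hhead3]; exact List.mem_cons_of_mem _ hx
    · rintro rfl
      rw [hhead3] at hd3
      exact hd3.notMem hx
  have htd2 : ((seg2 h hh j).support.tail).Nodup := by
    rw [hhead2] at hd2; exact hd2.of_cons
  have htd3 : ((seg3 h hh j).support.tail).Nodup := by
    rw [hhead3] at hd3; exact hd3.of_cons
  rw [route, Walk.isPath_def, Walk.support_append, Walk.support_append]
  rw [List.nodup_append]
  refine ⟨?_, htd3, ?_⟩
  · rw [List.nodup_append]
    refine ⟨(seg1_isPath hh j).2, htd2, ?_⟩
    intro x hx1 y hx2 hxy; subst hxy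
    obtain ⟨e1, e2⟩ := mem_seg1 hh j x hx1
    obtain ⟨hx2s, hx2ne⟩ := ht2 x hx2
    obtain ⟨f1, f2, f3⟩ := mem_seg2 hh j x hx2s
    exact hx2ne (Prod.ext (Fin.ext f1) e1)
  · intro x hx12 y hx3 hxy; subst hxy
    obtain ⟨hx3s, hx3ne⟩ := ht3 x hx3
    obtain ⟨g1, g2⟩ := mem_seg3 hh j x hx3s
    rw [List.mem_append] at hx12
    rcases hx12 with hx1 | hx2
    · obtain ⟨e1, e2⟩ := mem_seg1 hh j x hx1
      have hjval : j.val = x.2.val := by rw [e1]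
      have : j.val = 0 := by omega
      refine hx3ne (Prod.ext (Fin.ext ?_) (Fin.ext ?_)) <;> simp <;> omega
    · obtain ⟨hx2s, hx2ne⟩ := ht2 x hx2
      obtain ⟨f1, f2, f3⟩ := mem_seg2 hh j x hx2s
      refine hx3ne (Prod.ext (Fin.ext ?_) (Fin.ext ?_)) <;> simp <;> omega

lemma route_edges (h : ℕ) (hh : 1 ≤ h) (j : Fin (2 * h)) (e)
    (he : e ∈ (route h hh j).edges) :
    (∃ (u w : Fin (h + 1)) (c : Fin (2 * h)), e = s((u, c), (w, c)) ∧ u.val + 1 = w.val ∧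
       ((j.val = c.val ∧ u.val ≤ c.val / 2) ∨ (j.val / 2 = c.val ∧ c.val + 1 ≤ u.val))) ∨
    (∃ (r : Fin (h + 1)) (u w : Fin (2 * h)), e = s((r, u), (r, w)) ∧ u.val + 1 = w.val ∧
       r.val = j.val / 2 + 1) := by
  have hj := j.isLt
  rw [route, Walk.edges_append, Walk.edges_append, List.mem_append, List.mem_append] at he
  rcases he with (he | he) | he
  · rw [seg1, Walk.edges_copy] at he
    obtain ⟨u, w, h1, h2, h3, h4⟩ := upW_edges _ _ _ _ _ he
    exact Or.inl ⟨u, w, j, h1, h3, Or.inl ⟨rfl, by omega⟩⟩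
  · rw [seg2, Walk.edges_copy] at he
    obtain ⟨u, w, h1, h2, h3, h4⟩ := leftW_edges _ _ _ _ _ he
    exact Or.inr ⟨_, u, w, h1, h3, rfl⟩
  · rw [seg3, Walk.edges_copy] at he
    obtain ⟨u, w, h1, h2, h3, h4⟩ := upW_edges _ _ _ _ _ he
    exact Or.inl ⟨u, w, _, h1, h3, Or.inr ⟨rfl, h2⟩⟩

lemma route_edges_half (h : ℕ) (hh : 1 ≤ h) (j j' : Fin (2 * h)) (e)
    (he : e ∈ (route h hh j).edges) (he' : e ∈ (route h hh j').edges) :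
    j.val / 2 = j'.val / 2 := by
  rcases route_edges h hh j e he with ⟨u, w, c, h1, h2, h3⟩ | ⟨r, u, w, h1, h2, h3⟩ <;>
    rcases route_edges h hh j' e he' with ⟨u', w', c', g1, g2, g3⟩ | ⟨r', u', w', g1, g2, g3⟩ <;>
    rw [h1] at g1 <;>
    simp only [Sym2.eq_iff, Prod.mk.injEq, Fin.ext_iff] at g1 <;>
    omega

/-- Claim: in the grid with rows `0` (bottom) through `h` (top) and `2h` columns
(indexed here by `Fin (2h)`, so that column index `j` corresponds to column `j+1`
of the 1-indexed statement), there is a family of paths `P j` connecting the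
bottom-row vertex in column `j` to the top-row vertex in column `⌈(j+1)/2⌉ - 1 = j/2`,
such that every edge of the grid belongs to at most `2` of the paths. -/
theorem grid_routing_congestion_two (h : ℕ) (hh : 1 ≤ h) :
    ∃ P : (j : Fin (2 * h)) → (rectGrid (h + 1) (2 * h)).Walk
        (⟨0, by omega⟩, j) (⟨h, by omega⟩, ⟨j.val / 2, by have := j.isLt; omega⟩),
      (∀ j, (P j).IsPath) ∧
      (∀ e : Sym2 (Fin (h + 1) × Fin (2 * h)),
        {j : Fin (2 * h) | e ∈ (P j).edges}.ncard ≤ 2) := by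
  refine ⟨route h hh, route_isPath h hh, fun e => ?_⟩
  rcases Set.eq_empty_or_nonempty {j : Fin (2 * h) | e ∈ (route h hh j).edges} with hS | ⟨j0, hj0⟩
  · rw [hS]; simp
  · have hj0lt := j0.isLt
    have hsub : {j : Fin (2 * h) | e ∈ (route h hh j).edges} ⊆
        {⟨2 * (j0.val / 2), by omega⟩, ⟨2 * (j0.val / 2) + 1, by omega⟩} := by
      intro j hj
      have hhalf := route_edges_half h hh j j0 e hj hj0
      have hjlt := j.isLt
      rcases Nat.even_or_odd j.val with ⟨p, hp⟩ | ⟨p, hp⟩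
      · exact Or.inl (Fin.ext (by simp; omega))
      · exact Or.inr (Fin.ext (by simp; omega))
    calc _ ≤ ({⟨2 * (j0.val / 2), by omega⟩, ⟨2 * (j0.val / 2) + 1, by omega⟩} :
          Set (Fin (2 * h))).ncard := Set.ncard_le_ncard hsub (Set.toFinite _)
      _ ≤ 2 := by
        apply le_trans (Set.ncard_insert_le _ _)
        simp
end

section
/- Let $G$ be a finite graph and let $\mathcal{Z}$ be a collection of pairwise disjoint subsets of $V(G)$ such that for each $Z\in\mathcal{Z}$: $G[Z]$ is a $k_Z\times k_Z$ grid with $k_Z\ge 2$; every vertex in the first row of the grid $G[Z]$ is incident to exactly one edge of $\mathrm{out}_G(Z)$; and no other vertex of $Z$ is incident to an edge of $\mathrm{out}_G(Z)$. Let $s,t$ be two vertices of $G$ not belonging to any $Z\in\mathcal{Z}$, and let $(A,B)$ be a minimum edge cut separating $s$ from $t$ (i.e., a partition of $V(G)$ with $s\in A$, $t\in B$ minimizing $|E(A,B)|$). Then both $A$ and $B$ are canonical for $\mathcal{Z}$: for every $Z\in\mathcal{Z}$, either $Z\subseteq A$ or $Z\subseteq B$. -/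
def pairCut {V : Type*} (G : SimpleGraph V) (X Y : Set V) : Set (V × V) :=
  {p | G.Adj p.1 p.2 ∧ p.1 ∈ X ∧ p.2 ∈ Y}

lemma cutSet_comm {V : Type*} (G : SimpleGraph V) (X Y : Set V) :
    cutSet G X Y = cutSet G Y X := by
  ext e
  constructor <;> rintro ⟨u, v, h, hu, hv, rfl⟩
  · exact ⟨v, u, h.symm, hv, hu, Sym2.eq_swap.symm⟩
  · exact ⟨v, u, h.symm, hv, hu, Sym2.eq_swap.symm⟩

lemma ncard_cutSet {V : Type*} (G : SimpleGraph V) {X Y : Set V} (hd : Disjoint X Y) :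
    (cutSet G X Y).ncard = (pairCut G X Y).ncard := by
  have himg : cutSet G X Y = (fun p : V × V => s(p.1, p.2)) '' pairCut G X Y := by
    ext e
    constructor
    · rintro ⟨u, v, h, hu, hv, rfl⟩; exact ⟨(u, v), ⟨h, hu, hv⟩, rfl⟩
    · rintro ⟨⟨u, v⟩, ⟨h, hu, hv⟩, rfl⟩; exact ⟨u, v, h, hu, hv, rfl⟩
  rw [himg, Set.ncard_image_of_injOn]
  rintro ⟨u, v⟩ ⟨h, hu, hv⟩ ⟨u', v'⟩ ⟨h', hu', hv'⟩ he
  simp only [Sym2.eq, Sym2.rel_iff', Prod.mk.injEq, Prod.swap_prod_mk] at he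
  rcases he with ⟨rfl, rfl⟩ | ⟨h1, h2⟩
  · rfl
  · subst h1; exact absurd hv' (Set.disjoint_left.mp hd hu)

lemma pairCut_union_left {V : Type*} (G : SimpleGraph V) (X1 X2 Y : Set V) :
    pairCut G (X1 ∪ X2) Y = pairCut G X1 Y ∪ pairCut G X2 Y := by
  ext p; simp only [pairCut, Set.mem_setOf_eq, Set.mem_union]; tauto

lemma pairCut_union_right {V : Type*} (G : SimpleGraph V) (X Y1 Y2 : Set V) :
    pairCut G X (Y1 ∪ Y2) = pairCut G X Y1 ∪ pairCut G X Y2 := by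
  ext p; simp only [pairCut, Set.mem_setOf_eq, Set.mem_union]; tauto

lemma pairCut_disj_left {V : Type*} (G : SimpleGraph V) {X1 X2 : Set V} (Y1 Y2 : Set V)
    (h : Disjoint X1 X2) : Disjoint (pairCut G X1 Y1) (pairCut G X2 Y2) := by
  rw [Set.disjoint_left]
  rintro p ⟨-, hu, -⟩ ⟨-, hu', -⟩
  exact Set.disjoint_left.mp h hu hu'

lemma pairCut_disj_right {V : Type*} (G : SimpleGraph V) (X1 X2 : Set V) {Y1 Y2 : Set V}
    (h : Disjoint Y1 Y2) : Disjoint (pairCut G X1 Y1) (pairCut G X2 Y2) := by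
  rw [Set.disjoint_left]
  rintro p ⟨-, -, hv⟩ ⟨-, -, hv'⟩
  exact Set.disjoint_left.mp h hv hv'

lemma exists_flip (P : ℕ → Prop) : ∀ (y x : ℕ), x ≤ y → P x → ¬ P y →
    ∃ i, i + 1 ≤ y ∧ P i ∧ ¬ P (i + 1) := by
  intro y
  induction y with
  | zero => intro x hx hPx hPy; cases Nat.le_zero.mp hx; exact absurd hPx hPy
  | succ y ih =>
    intro x hx hPx hPy
    by_cases h : P y
    · exact ⟨y, le_refl _, h, hPy⟩
    · have hxy : x ≤ y := by
        rcases Nat.lt_or_ge x (y+1) with h' | h'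
        · omega
        · exfalso; have : x = y + 1 := by omega
          exact hPy (this ▸ hPx)
      obtain ⟨i, h1, h2, h3⟩ := ih x hxy hPx h
      exact ⟨i, by omega, h2, h3⟩

lemma grid_cut_lower (k : ℕ) (hk : 2 ≤ k) (A B : Set (Fin k × Fin k))
    (hU : A ∪ B = Set.univ) (hd : Disjoint A B) (hA : A.Nonempty) (hB : B.Nonempty) :
    min {w : Fin k × Fin k | w.1.val = 0 ∧ w ∈ A}.ncard
        {w : Fin k × Fin k | w.1.val = 0 ∧ w ∈ B}.ncard + 1
      ≤ (pairCut (gridGraph k) A B).ncard := by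
  have hmemA : ∀ w : Fin k × Fin k, w ∉ B → w ∈ A := by
    intro w hw
    have : w ∈ A ∪ B := hU ▸ Set.mem_univ w
    rcases this with h | h; · tauto
    · tauto
  have hmemB : ∀ w : Fin k × Fin k, w ∉ A → w ∈ B := by
    intro w hw
    have : w ∈ A ∪ B := hU ▸ Set.mem_univ w
    rcases this with h | h; · tauto
    · tauto
  set CP := pairCut (gridGraph k) A B with hCP
  set CPv := {p : (Fin k × Fin k) × Fin k × Fin k | p ∈ CP ∧ p.1.2 = p.2.2} with hCPv
  set CPh := {p : (Fin k × Fin k) × Fin k × Fin k | p ∈ CP ∧ p.1.1 = p.2.1} with hCPh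
  have hsplit : CP = CPv ∪ CPh := by
    ext p
    constructor
    · intro hp
      rcases hp.1 with ⟨h1, -⟩ | ⟨h2, -⟩
      · exact Or.inr ⟨hp, h1⟩
      · exact Or.inl ⟨hp, h2⟩
    · rintro (⟨hp, -⟩ | ⟨hp, -⟩) <;> exact hp
  have hdisjvh : Disjoint CPv CPh := by
    rw [Set.disjoint_left]
    rintro p ⟨hp, h2⟩ ⟨-, h1⟩
    have : p.1 = p.2 := Prod.ext h1 h2
    exact (gridGraph k).loopless.irrefl p.1 (this ▸ hp.1)
  set Cols := {j : Fin k | (∃ i, (i, j) ∈ A) ∧ (∃ i, (i, j) ∈ B)} with hCols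
  set Rows := {i : Fin k | (∃ j, (i, j) ∈ A) ∧ (∃ j, (i, j) ∈ B)} with hRows
  have key_col : Cols ⊆ (fun p : (Fin k × Fin k) × Fin k × Fin k => p.1.2) '' CPv := by
    rintro j ⟨⟨i1, hi1⟩, ⟨i2, hi2⟩⟩
    set P : ℕ → Prop := fun n => ∃ h : n < k, ((⟨n, h⟩ : Fin k), j) ∈ A with hP
    have hP1 : P i1.val := ⟨i1.isLt, hi1⟩
    have hP2 : ¬ P i2.val := by
      rintro ⟨h, hmem⟩
      exact Set.disjoint_left.mp hd hmem hi2
    rcases le_or_gt i1.val i2.val with hle | hlt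
    · obtain ⟨i, hi, hPi, hPi1⟩ := exists_flip P i2.val i1.val hle hP1 hP2
      have hik : i + 1 < k := lt_of_le_of_lt hi i2.isLt
      obtain ⟨hik', hu⟩ := hPi
      have hv : ((⟨i + 1, hik⟩ : Fin k), j) ∈ B := hmemB _ (fun hmem => hPi1 ⟨hik, hmem⟩)
      refine ⟨(((⟨i, hik'⟩ : Fin k), j), ((⟨i + 1, hik⟩ : Fin k), j)), ⟨⟨?_, hu, hv⟩, rfl⟩, rfl⟩
      exact Or.inr ⟨rfl, Or.inl rfl⟩
    · obtain ⟨i, hi, hPi, hPi1⟩ :=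
        exists_flip (fun n => ¬ P n) i1.val i2.val (le_of_lt hlt) hP2 (not_not_intro hP1)
      have hik : i + 1 < k := lt_of_le_of_lt hi i1.isLt
      obtain ⟨hik', hu⟩ := not_not.mp hPi1
      have hv : ((⟨i, by omega⟩ : Fin k), j) ∈ B := hmemB _ (fun hmem => hPi ⟨by omega, hmem⟩)
      refine ⟨(((⟨i + 1, hik'⟩ : Fin k), j), ((⟨i, by omega⟩ : Fin k), j)), ⟨⟨?_, hu, hv⟩, rfl⟩, rfl⟩
      exact Or.inr ⟨rfl, Or.inr rfl⟩
  have key_row : Rows ⊆ (fun p : (Fin k × Fin k) × Fin k × Fin k => p.1.1) '' CPh := by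
    rintro i ⟨⟨j1, hj1⟩, ⟨j2, hj2⟩⟩
    set P : ℕ → Prop := fun n => ∃ h : n < k, (i, (⟨n, h⟩ : Fin k)) ∈ A with hP
    have hP1 : P j1.val := ⟨j1.isLt, hj1⟩
    have hP2 : ¬ P j2.val := by
      rintro ⟨h, hmem⟩
      exact Set.disjoint_left.mp hd hmem hj2
    rcases le_or_gt j1.val j2.val with hle | hlt
    · obtain ⟨jj, hj, hPj, hPj1⟩ := exists_flip P j2.val j1.val hle hP1 hP2
      have hjk : jj + 1 < k := lt_of_le_of_lt hj j2.isLt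
      obtain ⟨hjk', hu⟩ := hPj
      have hv : (i, (⟨jj + 1, hjk⟩ : Fin k)) ∈ B := hmemB _ (fun hmem => hPj1 ⟨hjk, hmem⟩)
      refine ⟨((i, (⟨jj, hjk'⟩ : Fin k)), (i, (⟨jj + 1, hjk⟩ : Fin k))), ⟨⟨?_, hu, hv⟩, rfl⟩, rfl⟩
      exact Or.inl ⟨rfl, Or.inl rfl⟩
    · obtain ⟨jj, hj, hPj, hPj1⟩ :=
        exists_flip (fun n => ¬ P n) j1.val j2.val (le_of_lt hlt) hP2 (not_not_intro hP1)
      have hjk : jj + 1 < k := lt_of_le_of_lt hj j1.isLt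
      obtain ⟨hjk', hu⟩ := not_not.mp hPj1
      have hv : (i, (⟨jj, by omega⟩ : Fin k)) ∈ B := hmemB _ (fun hmem => hPj ⟨by omega, hmem⟩)
      refine ⟨((i, (⟨jj + 1, hjk'⟩ : Fin k)), (i, (⟨jj, by omega⟩ : Fin k))), ⟨⟨?_, hu, hv⟩, rfl⟩, rfl⟩
      exact Or.inl ⟨rfl, Or.inr rfl⟩
  have hcols_le : Cols.ncard ≤ CPv.ncard :=
    le_trans (Set.ncard_le_ncard key_col (Set.toFinite _)) (Set.ncard_image_le (Set.toFinite _))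
  have hrows_le : Rows.ncard ≤ CPh.ncard :=
    le_trans (Set.ncard_le_ncard key_row (Set.toFinite _)) (Set.ncard_image_le (Set.toFinite _))
  have hcp : CPv.ncard + CPh.ncard ≤ CP.ncard := by
    rw [hsplit, Set.ncard_union_eq hdisjvh (Set.toFinite _) (Set.toFinite _)]
  have hcr : Cols.ncard + Rows.ncard ≤ CP.ncard := by omega
  -- first row sets
  set i0 : Fin k := ⟨0, by omega⟩ with hi0
  set TA := {j : Fin k | (i0, j) ∈ A} with hTA
  set TB := {j : Fin k | (i0, j) ∈ B} with hTBdef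
  have hSA : {w : Fin k × Fin k | w.1.val = 0 ∧ w ∈ A} = (fun j => (i0, j)) '' TA := by
    ext ⟨i, j⟩
    constructor
    · rintro ⟨h0, hm⟩
      have : i = i0 := Fin.ext h0
      exact ⟨j, by rwa [this] at hm, by rw [this]⟩
    · rintro ⟨j', hj', heq⟩
      obtain ⟨h1, h2⟩ := Prod.mk.injEq .. ▸ heq
      refine ⟨by rw [← h1], ?_⟩
      rw [← h1, ← h2]; exact hj'
  have hSB : {w : Fin k × Fin k | w.1.val = 0 ∧ w ∈ B} = (fun j => (i0, j)) '' TB := by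
    ext ⟨i, j⟩
    constructor
    · rintro ⟨h0, hm⟩
      have : i = i0 := Fin.ext h0
      exact ⟨j, by rwa [this] at hm, by rw [this]⟩
    · rintro ⟨j', hj', heq⟩
      obtain ⟨h1, h2⟩ := Prod.mk.injEq .. ▸ heq
      refine ⟨by rw [← h1], ?_⟩
      rw [← h1, ← h2]; exact hj'
  have hinj : ∀ (S : Set (Fin k)), Set.InjOn (fun j => (i0, j)) S := by
    intro S j1 _ j2 _ h
    exact (Prod.mk.injEq .. ▸ h).2
  rw [hSA, hSB, Set.ncard_image_of_injOn (hinj TA), Set.ncard_image_of_injOn (hinj TB)]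
  have hTBc : TB = TAᶜ := by
    ext j
    constructor
    · intro hj hj'
      exact Set.disjoint_left.mp hd hj' hj
    · intro hj
      exact hmemB _ hj
  have hab : TA.ncard + TB.ncard = k := by
    rw [hTBc, Set.ncard_add_ncard_compl]
    simp [Nat.card_eq_fintype_card]
  by_cases h1c : ∃ j : Fin k, ∀ i : Fin k, (i, j) ∈ A
  · by_cases h2c : ∃ j : Fin k, ∀ i : Fin k, (i, j) ∈ B
    · -- every row meets both
      obtain ⟨j1, hj1⟩ := h1c
      obtain ⟨j2, hj2⟩ := h2c
      have hRu : Rows = Set.univ := by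
        ext i
        exact ⟨fun _ => trivial, fun _ => ⟨⟨j1, hj1 i⟩, ⟨j2, hj2 i⟩⟩⟩
      have : Rows.ncard = k := by
        rw [hRu, Set.ncard_univ]
        simp [Nat.card_eq_fintype_card]
      omega
    · -- every column meets A; TB ⊆ Cols, Rows nonempty
      push_neg at h2c
      have hTBC : TB ⊆ Cols := by
        intro j hj
        obtain ⟨i, hi⟩ := h2c j
        exact ⟨⟨i, hmemA _ hi⟩, ⟨i0, hj⟩⟩
      have hb : TB.ncard ≤ Cols.ncard := Set.ncard_le_ncard hTBC (Set.toFinite _)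
      obtain ⟨⟨i, j⟩, hij⟩ := hB
      obtain ⟨j1, hj1⟩ := h1c
      have hRpos : 0 < Rows.ncard := by
        rw [Set.ncard_pos (Set.toFinite _)]
        exact ⟨i, ⟨j1, hj1 i⟩, ⟨j, hij⟩⟩
      omega
  · by_cases h2c : ∃ j : Fin k, ∀ i : Fin k, (i, j) ∈ B
    · push_neg at h1c
      have hTAC : TA ⊆ Cols := by
        intro j hj
        obtain ⟨i, hi⟩ := h1c j
        exact ⟨⟨i0, hj⟩, ⟨i, hmemB _ hi⟩⟩
      have ha : TA.ncard ≤ Cols.ncard := Set.ncard_le_ncard hTAC (Set.toFinite _)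
      obtain ⟨⟨i, j⟩, hij⟩ := hA
      obtain ⟨j2, hj2⟩ := h2c
      have hRpos : 0 < Rows.ncard := by
        rw [Set.ncard_pos (Set.toFinite _)]
        exact ⟨i, ⟨j, hij⟩, ⟨j2, hj2 i⟩⟩
      omega
    · push_neg at h1c
      push_neg at h2c
      have hCu : Cols = Set.univ := by
        ext j
        refine ⟨fun _ => trivial, fun _ => ⟨?_, ?_⟩⟩
        · obtain ⟨i, hi⟩ := h2c j
          exact ⟨i, hmemA _ hi⟩
        · obtain ⟨i, hi⟩ := h1c j
          exact ⟨i, hmemB _ hi⟩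
      have : Cols.ncard = k := by
        rw [hCu, Set.ncard_univ]
        simp [Nat.card_eq_fintype_card]
      omega

lemma move_lt {V : Type*} [Fintype V] (G : SimpleGraph V) (Z A B : Set V)
    (hU : A ∪ B = Set.univ) (hd : Disjoint A B)
    (k : ℕ) (hk : 2 ≤ k) (f : Z ≃ (Fin k × Fin k))
    (hiso : ∀ u v : Z, G.Adj u v ↔ (gridGraph k).Adj (f u) (f v))
    (hone : ∀ u : Z, (f u).1.val = 0 → {v : V | v ∉ Z ∧ G.Adj u v}.ncard = 1)
    (hno : ∀ u : Z, (f u).1.val ≠ 0 → ∀ v : V, v ∉ Z → ¬ G.Adj u v)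
    (hZA : (A ∩ Z).Nonempty) (hZB : (B ∩ Z).Nonempty)
    (hba : {w : Fin k × Fin k | w.1.val = 0 ∧ (↑(f.symm w) : V) ∈ B}.ncard ≤
           {w : Fin k × Fin k | w.1.val = 0 ∧ (↑(f.symm w) : V) ∈ A}.ncard) :
    (cutSet G (A ∪ Z) (B \ Z)).ncard < (cutSet G A B).ncard := by
  classical
  have hmemB : ∀ x : V, x ∉ A → x ∈ B := by
    intro x hx
    have : x ∈ A ∪ B := hU ▸ Set.mem_univ x
    rcases this with h | h
    · exact absurd h hx
    · exact h
  have hd' : Disjoint (A ∪ Z) (B \ Z) := by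
    rw [Set.disjoint_left]
    rintro x (hx | hx) ⟨hxB, hxZ⟩
    · exact Set.disjoint_left.mp hd hx hxB
    · exact hxZ hx
  rw [ncard_cutSet G hd, ncard_cutSet G hd']
  -- decompositions
  have hAeq : A = (A ∩ Z) ∪ (A \ Z) := by
    rw [Set.inter_union_diff]
  have hBeq : B = (B ∩ Z) ∪ (B \ Z) := by
    rw [Set.inter_union_diff]
  have hA'eq : A ∪ Z = ((A \ Z) ∪ (A ∩ Z)) ∪ (B ∩ Z) := by
    ext x
    simp only [Set.mem_union, Set.mem_diff, Set.mem_inter_iff]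
    constructor
    · rintro (hx | hx)
      · by_cases hz : x ∈ Z
        · exact Or.inl (Or.inr ⟨hx, hz⟩)
        · exact Or.inl (Or.inl ⟨hx, hz⟩)
      · by_cases ha : x ∈ A
        · exact Or.inl (Or.inr ⟨ha, hx⟩)
        · exact Or.inr ⟨hmemB x ha, hx⟩
    · rintro ((⟨hx, -⟩ | ⟨hx, -⟩) | ⟨-, hx⟩)
      · exact Or.inl hx
      · exact Or.inl hx
      · exact Or.inr hx
  have e1 : pairCut G A B =
      (pairCut G (A ∩ Z) (B ∩ Z) ∪ pairCut G (A ∩ Z) (B \ Z)) ∪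
      (pairCut G (A \ Z) (B ∩ Z) ∪ pairCut G (A \ Z) (B \ Z)) := by
    conv_lhs => rw [hAeq, hBeq]
    rw [pairCut_union_left, pairCut_union_right, pairCut_union_right]
  have e2 : pairCut G (A ∪ Z) (B \ Z) =
      (pairCut G (A \ Z) (B \ Z) ∪ pairCut G (A ∩ Z) (B \ Z)) ∪
      pairCut G (B ∩ Z) (B \ Z) := by
    conv_lhs => rw [hA'eq]
    rw [pairCut_union_left, pairCut_union_left]
  have dAZ : Disjoint (A ∩ Z) (A \ Z) := by
    rw [Set.disjoint_left]; rintro x ⟨-, hx⟩ ⟨-, hx'⟩; exact hx' hx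
  have dBZ : Disjoint (B ∩ Z) (B \ Z) := by
    rw [Set.disjoint_left]; rintro x ⟨-, hx⟩ ⟨-, hx'⟩; exact hx' hx
  have dAB : Disjoint (A ∩ Z) (B ∩ Z) := by
    rw [Set.disjoint_left]; rintro x ⟨hx, -⟩ ⟨hx', -⟩; exact Set.disjoint_left.mp hd hx hx'
  have dAdB : Disjoint (A \ Z) (B ∩ Z) := by
    rw [Set.disjoint_left]; rintro x ⟨hx, -⟩ ⟨hx', -⟩; exact Set.disjoint_left.mp hd hx hx'
  have dAdBZ : Disjoint (A \ Z) (B ∩ Z) := dAdB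
  have n_e1 : (pairCut G A B).ncard =
      (pairCut G (A ∩ Z) (B ∩ Z)).ncard + (pairCut G (A ∩ Z) (B \ Z)).ncard +
      ((pairCut G (A \ Z) (B ∩ Z)).ncard + (pairCut G (A \ Z) (B \ Z)).ncard) := by
    rw [e1, Set.ncard_union_eq ?_ (Set.toFinite _) (Set.toFinite _),
      Set.ncard_union_eq (pairCut_disj_right G _ _ dBZ) (Set.toFinite _) (Set.toFinite _),
      Set.ncard_union_eq (pairCut_disj_right G _ _ dBZ) (Set.toFinite _) (Set.toFinite _)]
    exact Disjoint.union_left (Disjoint.union_right (pairCut_disj_left G _ _ dAZ)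
      (pairCut_disj_left G _ _ dAZ)) (Disjoint.union_right (pairCut_disj_left G _ _ dAZ)
      (pairCut_disj_left G _ _ dAZ))
  have n_e2 : (pairCut G (A ∪ Z) (B \ Z)).ncard =
      (pairCut G (A \ Z) (B \ Z)).ncard + (pairCut G (A ∩ Z) (B \ Z)).ncard +
      (pairCut G (B ∩ Z) (B \ Z)).ncard := by
    rw [e2, Set.ncard_union_eq ?_ (Set.toFinite _) (Set.toFinite _),
      Set.ncard_union_eq (pairCut_disj_left G _ _ dAZ.symm) (Set.toFinite _) (Set.toFinite _)]
    refine Disjoint.union_left (pairCut_disj_left G _ _ ?_) (pairCut_disj_left G _ _ dAB)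
    rw [Set.disjoint_left]; rintro x ⟨hx, -⟩ ⟨hx', -⟩; exact Set.disjoint_left.mp hd hx hx'
  -- bound (I): |P (B∩Z) (B\Z)| ≤ b
  have junk : Fin k × Fin k := (⟨0, by omega⟩, ⟨0, by omega⟩)
  set g1 : V → Fin k × Fin k := fun v => if h : v ∈ Z then f ⟨v, h⟩ else junk with hg1
  have bound1 : (pairCut G (B ∩ Z) (B \ Z)).ncard ≤
      {w : Fin k × Fin k | w.1.val = 0 ∧ (↑(f.symm w) : V) ∈ B}.ncard := by
    have himg : (fun p : V × V => g1 p.1) '' pairCut G (B ∩ Z) (B \ Z) ⊆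
        {w : Fin k × Fin k | w.1.val = 0 ∧ (↑(f.symm w) : V) ∈ B} := by
      rintro w ⟨⟨u, v⟩, ⟨hadj, ⟨huB, huZ⟩, ⟨hvB, hvZ⟩⟩, rfl⟩
      simp only [hg1, dif_pos huZ]
      constructor
      · by_contra h0
        exact hno ⟨u, huZ⟩ h0 v hvZ hadj
      · rw [Equiv.symm_apply_apply]
        exact huB
    have hinj : Set.InjOn (fun p : V × V => g1 p.1) (pairCut G (B ∩ Z) (B \ Z)) := by
      rintro ⟨u, v⟩ ⟨hadj, ⟨huB, huZ⟩, ⟨hvB, hvZ⟩⟩ ⟨u', v'⟩ ⟨hadj', ⟨huB', huZ'⟩, ⟨hvB', hvZ'⟩⟩ heq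
      simp only [hg1, dif_pos huZ, dif_pos huZ'] at heq
      have hu : u = u' := congrArg Subtype.val (f.injective heq)
      subst hu
      have hrow : (f ⟨u, huZ⟩).1.val = 0 := by
        by_contra h0
        exact hno ⟨u, huZ⟩ h0 v hvZ hadj
      obtain ⟨a, ha⟩ := Set.ncard_eq_one.mp (hone ⟨u, huZ⟩ hrow)
      have h1 : v ∈ {v : V | v ∉ Z ∧ G.Adj (↑(⟨u, huZ⟩ : Z)) v} := ⟨hvZ, hadj⟩
      have h2 : v' ∈ {v : V | v ∉ Z ∧ G.Adj (↑(⟨u, huZ⟩ : Z)) v} := ⟨hvZ', hadj'⟩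
      rw [ha] at h1 h2
      exact Prod.ext rfl (h1.trans h2.symm)
    calc (pairCut G (B ∩ Z) (B \ Z)).ncard
        = ((fun p : V × V => g1 p.1) '' pairCut G (B ∩ Z) (B \ Z)).ncard :=
          (Set.ncard_image_of_injOn hinj).symm
      _ ≤ _ := Set.ncard_le_ncard himg (Set.toFinite _)
  -- bound (II): b + 1 ≤ |P (A∩Z) (B∩Z)|
  have bound2 : {w : Fin k × Fin k | w.1.val = 0 ∧ (↑(f.symm w) : V) ∈ B}.ncard + 1 ≤
      (pairCut G (A ∩ Z) (B ∩ Z)).ncard := by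
    set As : Set (Fin k × Fin k) := {w | (↑(f.symm w) : V) ∈ A} with hAs
    set Bs : Set (Fin k × Fin k) := {w | (↑(f.symm w) : V) ∈ B} with hBs
    have hUs : As ∪ Bs = Set.univ := by
      ext w
      refine ⟨fun _ => trivial, fun _ => ?_⟩
      by_cases h : (↑(f.symm w) : V) ∈ A
      · exact Or.inl h
      · exact Or.inr (hmemB _ h)
    have hds : Disjoint As Bs := by
      rw [Set.disjoint_left]
      intro w hw hw'
      exact Set.disjoint_left.mp hd hw hw'
    have hAsne : As.Nonempty := by
      obtain ⟨x, hxA, hxZ⟩ := hZA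
      refine ⟨f ⟨x, hxZ⟩, ?_⟩
      show (↑(f.symm (f ⟨x, hxZ⟩)) : V) ∈ A
      rw [Equiv.symm_apply_apply]
      exact hxA
    have hBsne : Bs.Nonempty := by
      obtain ⟨x, hxB, hxZ⟩ := hZB
      refine ⟨f ⟨x, hxZ⟩, ?_⟩
      show (↑(f.symm (f ⟨x, hxZ⟩)) : V) ∈ B
      rw [Equiv.symm_apply_apply]
      exact hxB
    have hgrid := grid_cut_lower k hk As Bs hUs hds hAsne hBsne
    have hminb : min {w : Fin k × Fin k | w.1.val = 0 ∧ w ∈ As}.ncard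
        {w : Fin k × Fin k | w.1.val = 0 ∧ w ∈ Bs}.ncard =
        {w : Fin k × Fin k | w.1.val = 0 ∧ (↑(f.symm w) : V) ∈ B}.ncard :=
      min_eq_right hba
    rw [hminb] at hgrid
    refine le_trans hgrid (le_of_eq ?_)
    -- |pairCut grid As Bs| = |pairCut G (A∩Z) (B∩Z)|
    have himg : (fun p : V × V => (g1 p.1, g1 p.2)) '' pairCut G (A ∩ Z) (B ∩ Z) =
        pairCut (gridGraph k) As Bs := by
      ext w
      constructor
      · rintro ⟨⟨u, v⟩, ⟨hadj, ⟨huA, huZ⟩, ⟨hvB, hvZ⟩⟩, rfl⟩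
        refine ⟨?_, ?_, ?_⟩
        · show (gridGraph k).Adj (g1 u) (g1 v)
          simp only [hg1, dif_pos huZ, dif_pos hvZ]
          exact (hiso ⟨u, huZ⟩ ⟨v, hvZ⟩).mp hadj
        · show (↑(f.symm (g1 u)) : V) ∈ A
          simp only [hg1, dif_pos huZ]
          rw [Equiv.symm_apply_apply]; exact huA
        · show (↑(f.symm (g1 v)) : V) ∈ B
          simp only [hg1, dif_pos hvZ]
          rw [Equiv.symm_apply_apply]; exact hvB
      · rintro ⟨hadj, hw1, hw2⟩
        refine ⟨((↑(f.symm w.1) : V), (↑(f.symm w.2) : V)),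
          ⟨?_, ⟨hw1, (f.symm w.1).2⟩, ⟨hw2, (f.symm w.2).2⟩⟩, ?_⟩
        · have := (hiso (f.symm w.1) (f.symm w.2)).mpr
          rw [Equiv.apply_symm_apply, Equiv.apply_symm_apply] at this
          exact this hadj
        · simp only [hg1, dif_pos (f.symm w.1).2, dif_pos (f.symm w.2).2]
          rw [show (⟨(↑(f.symm w.1) : V), (f.symm w.1).2⟩ : Z) = f.symm w.1 from rfl,
            show (⟨(↑(f.symm w.2) : V), (f.symm w.2).2⟩ : Z) = f.symm w.2 from rfl,
            Equiv.apply_symm_apply, Equiv.apply_symm_apply]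
    have hinj : Set.InjOn (fun p : V × V => (g1 p.1, g1 p.2)) (pairCut G (A ∩ Z) (B ∩ Z)) := by
      rintro ⟨u, v⟩ ⟨-, ⟨-, huZ⟩, ⟨-, hvZ⟩⟩ ⟨u', v'⟩ ⟨-, ⟨-, huZ'⟩, ⟨-, hvZ'⟩⟩ heq
      simp only [hg1, dif_pos huZ, dif_pos huZ', dif_pos hvZ, dif_pos hvZ',
        Prod.mk.injEq] at heq
      exact Prod.ext (congrArg Subtype.val (f.injective heq.1))
        (congrArg Subtype.val (f.injective heq.2))
    rw [← himg, Set.ncard_image_of_injOn hinj]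
  omega

/-- Claim: let `𝒵` be a collection of pairwise disjoint vertex sets such that each
`G[Z]` is a `k_Z × k_Z` grid (`k_Z ≥ 2`), every first-row vertex of the grid is
incident to exactly one edge leaving `Z` and no other vertex of `Z` is incident to an
edge leaving `Z`. If `s, t` lie in no `Z ∈ 𝒵` and `(A, B)` is a minimum edge cut
separating `s` from `t`, then both `A` and `B` are canonical for `𝒵`. -/
theorem minCut_canonical {V : Type*} [Fintype V] (G : SimpleGraph V)
    (𝒵 : Set (Set V)) (hdisj : 𝒵.Pairwise Disjoint)
    (hgrid : ∀ Z ∈ 𝒵, ∃ (k : ℕ), 2 ≤ k ∧ ∃ f : Z ≃ (Fin k × Fin k),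
      (∀ u v : Z, G.Adj u v ↔ (gridGraph k).Adj (f u) (f v)) ∧
      (∀ u : Z, (f u).1.val = 0 → {v : V | v ∉ Z ∧ G.Adj u v}.ncard = 1) ∧
      (∀ u : Z, (f u).1.val ≠ 0 → ∀ v : V, v ∉ Z → ¬ G.Adj u v))
    (s t : V) (hs : ∀ Z ∈ 𝒵, s ∉ Z) (ht : ∀ Z ∈ 𝒵, t ∉ Z)
    (A B : Set V) (hU : A ∪ B = Set.univ) (hd : Disjoint A B)
    (hsA : s ∈ A) (htB : t ∈ B)
    (hmin : ∀ A' B' : Set V, A' ∪ B' = Set.univ → Disjoint A' B' →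
      s ∈ A' → t ∈ B' → (cutSet G A B).ncard ≤ (cutSet G A' B').ncard) :
    ∀ Z ∈ 𝒵, Z ⊆ A ∨ Z ⊆ B := by
  intro Z hZ
  obtain ⟨k, hk, f, hiso, hone, hno⟩ := hgrid Z hZ
  by_contra hcon
  push_neg at hcon
  obtain ⟨hnA, hnB⟩ := hcon
  have hmemB : ∀ x : V, x ∉ A → x ∈ B := by
    intro x hx
    have : x ∈ A ∪ B := hU ▸ Set.mem_univ x
    rcases this with h | h
    · exact absurd h hx
    · exact h
  have hmemA : ∀ x : V, x ∉ B → x ∈ A := by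
    intro x hx
    have : x ∈ A ∪ B := hU ▸ Set.mem_univ x
    rcases this with h | h
    · exact h
    · exact absurd h hx
  obtain ⟨x, hxZ, hxA⟩ := Set.not_subset.mp hnA
  obtain ⟨y, hyZ, hyB⟩ := Set.not_subset.mp hnB
  have hZB : (B ∩ Z).Nonempty := ⟨x, hmemB x hxA, hxZ⟩
  have hZA : (A ∩ Z).Nonempty := ⟨y, hmemA y hyB, hyZ⟩
  rcases le_total {w : Fin k × Fin k | w.1.val = 0 ∧ (↑(f.symm w) : V) ∈ B}.ncard
      {w : Fin k × Fin k | w.1.val = 0 ∧ (↑(f.symm w) : V) ∈ A}.ncard with hba | hba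
  · have hlt := move_lt G Z A B hU hd k hk f hiso hone hno hZA hZB hba
    have hU' : (A ∪ Z) ∪ (B \ Z) = Set.univ := by
      ext z
      refine ⟨fun _ => trivial, fun _ => ?_⟩
      by_cases hz : z ∈ Z
      · exact Or.inl (Or.inr hz)
      · by_cases ha : z ∈ A
        · exact Or.inl (Or.inl ha)
        · exact Or.inr ⟨hmemB z ha, hz⟩
    have hd' : Disjoint (A ∪ Z) (B \ Z) := by
      rw [Set.disjoint_left]
      rintro z (hz | hz) ⟨hzB, hzZ⟩
      · exact Set.disjoint_left.mp hd hz hzB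
      · exact hzZ hz
    have := hmin (A ∪ Z) (B \ Z) hU' hd' (Or.inl hsA) ⟨htB, ht Z hZ⟩
    omega
  · have hlt := move_lt G Z B A (by rw [Set.union_comm]; exact hU) hd.symm k hk f hiso hone hno
      hZB hZA hba
    have hU' : (A \ Z) ∪ (B ∪ Z) = Set.univ := by
      ext z
      refine ⟨fun _ => trivial, fun _ => ?_⟩
      by_cases hz : z ∈ Z
      · exact Or.inr (Or.inr hz)
      · by_cases ha : z ∈ A
        · exact Or.inl ⟨ha, hz⟩
        · exact Or.inr (Or.inl (hmemB z ha))
    have hd' : Disjoint (A \ Z) (B ∪ Z) := by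
      rw [Set.disjoint_left]
      rintro z ⟨hzA, hzZ⟩ (hz | hz)
      · exact Set.disjoint_left.mp hd hzA hz
      · exact hzZ hz
    have hle := hmin (A \ Z) (B ∪ Z) hU' hd' ⟨hsA, hs Z hZ⟩ (Or.inl htB)
    rw [cutSet_comm G (A \ Z) (B ∪ Z)] at hle
    rw [cutSet_comm G B A] at hlt
    omega
end
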